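/- Let d ≥ 1 and let φ : ℂ^d → ℂ be an entire (everywhere complex-differentiable) function. Suppose there exist polynomials f_1, …, f_N ∈ ℂ[z_1,…,z_d] such that exp(Im φ(z)) ≤ max_{n=1,…,N} |f_n(z)| for all z ∈ ℂ^d (equivalently, Im φ(z) ≤ max_n log |f_n(z)| with the convention log 0 = −∞). Then φ is constant. -/

import Mathlib

open Polynomial Finset Complex

lemma abs_eval_le_aux (q : Polynomial ℂ) (t : ℂ) :
    ‖q.eval t‖ ≤
      (∑ i ∈ Finset.range (q.natDegree + 1), ‖q.coeff i‖) *
        (1 + ‖t‖) ^ q.natDegree := by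
  have ht : (0:ℝ) ≤ ‖t‖ := norm_nonneg _
  rw [Polynomial.eval_eq_sum_range]
  refine (norm_sum_le _ _).trans ?_
  rw [Finset.sum_mul]
  refine Finset.sum_le_sum fun i hi => ?_
  rw [norm_mul, norm_pow]
  have h1 : ‖t‖ ^ i ≤ (1 + ‖t‖) ^ q.natDegree := by
    calc ‖t‖ ^ i ≤ (1 + ‖t‖) ^ i :=
          pow_le_pow_left₀ ht (by linarith) i
      _ ≤ (1 + ‖t‖) ^ q.natDegree :=
          pow_le_pow_right₀ (by linarith) (Nat.lt_succ_iff.mp (Finset.mem_range.mp hi))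
  exact mul_le_mul_of_nonneg_left h1 (norm_nonneg _)

lemma onevar_const {g : ℂ → ℂ} (hg : Differentiable ℂ g) {C : ℝ} {k : ℕ} (hC : 0 ≤ C)
    (hb : ∀ t : ℂ, Real.exp (g t).im ≤ C * (1 + ‖t‖) ^ k) :
    ∀ s t : ℂ, g s = g t := by
  set h : ℂ → ℂ := fun t => Complex.exp (-Complex.I * g t) with hh_def
  have hh : Differentiable ℂ h := (hg.const_mul _).cexp
  have habs : ∀ t, ‖h t‖ = Real.exp (g t).im := by
    intro t
    rw [hh_def]
    simp [Complex.norm_exp, Complex.mul_re]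
  have hnorm : ∀ t : ℂ, ‖h t‖ ≤ C * (1 + ‖t‖) ^ k := by
    intro t
    rw [habs t]
    simpa using hb t
  -- power series
  set p := cauchyPowerSeries h 0 1 with hp_def
  have hpR : ∀ R : NNReal, 0 < R → cauchyPowerSeries h 0 R = p := fun R hR =>
    ((hh.hasFPowerSeriesOnBall 0 hR).hasFPowerSeriesAt).eq_formalMultilinearSeries
      ((hh.hasFPowerSeriesOnBall 0 one_pos).hasFPowerSeriesAt)
  have hcoef : ∀ n : ℕ, ∀ R : ℝ, 1 ≤ R → ‖p n‖ ≤ C * (1 + R) ^ k * (R⁻¹) ^ n := by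
    intro n R hR
    have hR0 : (0:ℝ) < R := lt_of_lt_of_le one_pos hR
    have hRcoe : ((R.toNNReal : ℝ)) = R := Real.coe_toNNReal R hR0.le
    have := norm_cauchyPowerSeries_le h 0 R n
    rw [← hpR R.toNNReal (by simpa [Real.toNNReal_pos] using hR0)]
    rw [hRcoe]
    refine this.trans ?_
    have hint : (∫ θ : ℝ in (0)..2 * Real.pi, ‖h (circleMap 0 R θ)‖) ≤
        (2 * Real.pi) * (C * (1 + R) ^ k) := by
      have h1 : (∫ θ : ℝ in (0)..2 * Real.pi, ‖h (circleMap 0 R θ)‖) ≤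
          ∫ _θ : ℝ in (0)..2 * Real.pi, C * (1 + R) ^ k := by
        apply intervalIntegral.integral_mono_on Real.two_pi_pos.le
        · exact ((hh.continuous.comp (continuous_circleMap 0 R)).norm).intervalIntegrable _ _
        · exact intervalIntegrable_const
        · intro θ _
          have := hnorm (circleMap 0 R θ)
          simpa [norm_circleMap_zero, abs_of_pos hR0] using this
      refine h1.trans (le_of_eq ?_)
      rw [intervalIntegral.integral_const, sub_zero, smul_eq_mul]
    rw [abs_of_pos hR0]
    refine mul_le_mul_of_nonneg_right ?_ (pow_nonneg (inv_nonneg.mpr hR0.le) n)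
    have h2pi : (0:ℝ) < 2 * Real.pi := Real.two_pi_pos
    have := mul_le_mul_of_nonneg_left hint (inv_nonneg.mpr h2pi.le)
    refine this.trans (le_of_eq ?_)
    field_simp
  have hzero : ∀ n : ℕ, k < n → p n = 0 := by
    intro n hn
    have key : ∀ R : ℝ, 1 ≤ R → ‖p n‖ ≤ C * 2 ^ k * R⁻¹ := by
      intro R hR
      have hR0 : (0:ℝ) < R := lt_of_lt_of_le one_pos hR
      refine (hcoef n R hR).trans ?_
      have h1 : (1 + R) ^ k ≤ 2 ^ k * R ^ k := by
        rw [← mul_pow]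
        exact pow_le_pow_left₀ (by linarith) (by linarith) k
      have h2 : (R⁻¹) ^ n ≤ (R⁻¹) ^ (k + 1) :=
        pow_le_pow_of_le_one (inv_nonneg.mpr hR0.le) (inv_le_one_of_one_le₀ hR) hn
      calc C * (1 + R) ^ k * (R⁻¹) ^ n ≤ C * (2 ^ k * R ^ k) * (R⁻¹) ^ (k + 1) := by
            gcongr
        _ = C * 2 ^ k * R⁻¹ := by
            rw [pow_succ, ← mul_assoc]
            field_simp
            ring_nf
            rw [mul_assoc, ← mul_pow, mul_inv_cancel₀ hR0.ne', one_pow, mul_one]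
    have hlim : Filter.Tendsto (fun R : ℝ => C * 2 ^ k * R⁻¹) Filter.atTop (nhds 0) := by
      simpa using tendsto_inv_atTop_zero.const_mul (C * 2 ^ k)
    have : ‖p n‖ ≤ 0 := by
      refine ge_of_tendsto hlim ?_
      filter_upwards [Filter.eventually_ge_atTop 1] with R hR using key R hR
    exact norm_le_zero_iff.mp this
  -- h is a polynomial
  have hsum : ∀ y : ℂ, h y = ∑ i ∈ Finset.range (k + 1), y ^ i * p.coeff i := by
    intro y
    have hmem : y ∈ EMetric.ball (0:ℂ) ⊤ := EMetric.mem_ball.mpr (edist_lt_top _ _)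
    have h1 := (hh.hasFPowerSeriesOnBall 0 one_pos).hasSum hmem
    rw [hpR 1 one_pos] at h1
    simp only [zero_add, FormalMultilinearSeries.apply_eq_pow_smul_coeff, smul_eq_mul] at h1
    refine h1.unique (hasSum_sum_of_ne_finset_zero ?_)
    intro b hb
    have : p b = 0 := hzero b (by simpa [Nat.lt_succ_iff] using hb)
    simp [FormalMultilinearSeries.coeff, this]
  set q : Polynomial ℂ := ∑ i ∈ Finset.range (k + 1), Polynomial.C (p.coeff i) * Polynomial.X ^ i
    with hq_def
  have heval : ∀ y : ℂ, q.eval y = h y := by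
    intro y
    rw [hsum y, hq_def, Polynomial.eval_finset_sum]
    simp only [Polynomial.eval_mul, Polynomial.eval_C, Polynomial.eval_pow, Polynomial.eval_X]
    exact Finset.sum_congr rfl fun i _ => (mul_comm _ _)
  have hdeg : q.degree ≤ 0 := by
    by_contra hd
    push_neg at hd
    obtain ⟨z, hz⟩ := Complex.exists_root hd
    have : h z = 0 := by rw [← heval z]; exact hz
    exact Complex.exp_ne_zero _ this
  have hconst : ∀ y : ℂ, h y = q.coeff 0 := by
    intro y
    rw [← heval y]
    conv_lhs => rw [Polynomial.eq_C_of_degree_le_zero hdeg]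
    exact Polynomial.eval_C
  -- deriv g = 0
  have hderiv : ∀ t : ℂ, deriv g t = 0 := by
    intro t
    have h1 : HasDerivAt h (Complex.exp (-Complex.I * g t) * (-Complex.I * deriv g t)) t :=
      ((hg t).hasDerivAt.const_mul (-Complex.I)).cexp
    have h2 : HasDerivAt h 0 t := by
      have : h = fun _ => q.coeff 0 := funext hconst
      rw [this]
      exact hasDerivAt_const t _
    have h3 := h1.unique h2
    have h4 : (-Complex.I * deriv g t) = 0 :=
      (mul_eq_zero.mp h3).resolve_left (Complex.exp_ne_zero _)
    have h5 : (-Complex.I : ℂ) ≠ 0 := by simp [Complex.I_ne_zero]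
    exact (mul_eq_zero.mp h4).resolve_left h5
  exact is_const_of_deriv_eq_zero hg hderiv


lemma onevar_poly {g : ℂ → ℂ} (hg : Differentiable ℂ g) {N : ℕ}
    (Q : Fin N → Polynomial ℂ)
    (hb : ∀ t : ℂ, ∃ n : Fin N, Real.exp (g t).im ≤ ‖(Q n).eval t‖) :
    ∀ s t : ℂ, g s = g t := by
  set k : ℕ := Finset.univ.sup fun n => (Q n).natDegree with hk_def
  set C : ℝ := ∑ n : Fin N, ∑ i ∈ Finset.range ((Q n).natDegree + 1),
    ‖(Q n).coeff i‖ with hC_def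
  have hCn : ∀ n : Fin N,
      (∑ i ∈ Finset.range ((Q n).natDegree + 1), ‖(Q n).coeff i‖) ≤ C := by
    intro n
    exact Finset.single_le_sum
      (f := fun m => ∑ i ∈ Finset.range ((Q m).natDegree + 1), ‖(Q m).coeff i‖)
      (fun m _ => Finset.sum_nonneg fun i _ => norm_nonneg _) (Finset.mem_univ n)
  have hC0 : 0 ≤ C :=
    Finset.sum_nonneg fun m _ => Finset.sum_nonneg fun i _ => norm_nonneg _
  have hbound : ∀ t : ℂ, Real.exp (g t).im ≤ C * (1 + ‖t‖) ^ k := by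
    intro t
    obtain ⟨n, hn⟩ := hb t
    have ht : (0:ℝ) ≤ ‖t‖ := norm_nonneg _
    refine hn.trans ((abs_eval_le_aux (Q n) t).trans ?_)
    have h1 : (1 + ‖t‖) ^ (Q n).natDegree ≤ (1 + ‖t‖) ^ k :=
      pow_le_pow_right₀ (by linarith) (Finset.le_sup (f := fun m => (Q m).natDegree) (Finset.mem_univ n))
    exact mul_le_mul (hCn n) h1 (by positivity) hC0
  exact onevar_const hg hC0 hbound



/-- Let `φ : ℂ^d → ℂ` (with `d ≥ 1`) be an entire function and
suppose there are polynomials `f 1, …, f N` (with `N ≥ 1`) such that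
`exp (Im (φ z)) ≤ max_n |f n z|` for all `z` (the inequality being expressed by
the existence, for each `z`, of some `n` with
`exp (Im (φ z)) ≤ |f n z|`).  Then `φ` is constant. -/
theorem entire_with_logarithmically_bounded_imaginary_part_constant
    (d : ℕ) (hd : 1 ≤ d) (φ : (Fin d → ℂ) → ℂ)
    (hφ : Differentiable ℂ φ)
    (N : ℕ) (hN : 0 < N) (f : Fin N → MvPolynomial (Fin d) ℂ)
    (hbound : ∀ z : Fin d → ℂ, ∃ n : Fin N,
      Real.exp (φ z).im ≤ ‖MvPolynomial.eval z (f n)‖) :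
    ∃ c : ℂ, ∀ z, φ z = c := by
  have key : ∀ a b : Fin d → ℂ, φ a = φ b := by
    intro a b
    set L : ℂ → (Fin d → ℂ) := fun t i => a i + (b i - a i) * t with hL_def
    have hL : Differentiable ℂ L := differentiable_pi.mpr fun i =>
      (differentiable_const _).add ((differentiable_const _).mul differentiable_id)
    set Q : Fin N → Polynomial ℂ := fun n => MvPolynomial.eval₂ Polynomial.C
      (fun i => Polynomial.C (a i) + Polynomial.C (b i - a i) * Polynomial.X) (f n) with hQ_def
    have hQe : ∀ (n : Fin N) (t : ℂ), Polynomial.eval t (Q n) = MvPolynomial.eval (L t) (f n) := by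
      intro n t
      have h1 : Polynomial.eval t (Q n) = (Polynomial.evalRingHom t)
          (MvPolynomial.eval₂ Polynomial.C
            (fun i => Polynomial.C (a i) + Polynomial.C (b i - a i) * Polynomial.X) (f n)) := rfl
      rw [h1, MvPolynomial.eval₂_comp_left]
      have h2 : (Polynomial.evalRingHom t).comp Polynomial.C = RingHom.id ℂ :=
        RingHom.ext fun x => by simp
      have h3 : ((Polynomial.evalRingHom t) ∘
          fun i => Polynomial.C (a i) + Polynomial.C (b i - a i) * Polynomial.X) = L t := by
        funext i
        simp [hL_def]
      rw [h2, h3]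
      rfl
    have hg : Differentiable ℂ (φ ∘ L) := hφ.comp hL
    have hb : ∀ t : ℂ, ∃ n : Fin N,
        Real.exp ((φ ∘ L) t).im ≤ ‖Polynomial.eval t (Q n)‖ := by
      intro t
      obtain ⟨n, hn⟩ := hbound (L t)
      exact ⟨n, by rw [hQe n t]; exact hn⟩
    have := onevar_poly hg Q hb 0 1
    have hL0 : L 0 = a := by funext i; simp [hL_def]
    have hL1 : L 1 = b := by funext i; simp [hL_def]
    simpa [Function.comp, hL0, hL1] using this
  exact ⟨φ 0, fun z => key z 0⟩
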